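/- For t > 0 and a > 0 with ta = (2r−1)π for some natural number r ≥ 1, the tail integral (∫_{-∞}^{-a} + ∫_{a}^{∞}) sin(tu)/(2πu) du satisfies −2/(π t a) < (∫_{-∞}^{-a} + ∫_{a}^{∞}) sin(tu)/(2πu) du < 0. -/

import Mathlib

open Filter intervalIntegral

open MeasureTheory Set

lemma rpow_eq (x : ℝ) (hx0 : 0 < x) : x ^ (-2:ℝ) = 1 / x ^ 2 := by
  rw [Real.rpow_neg hx0.le, one_div, show (2:ℝ) = ((2:ℕ):ℝ) by norm_num,
    Real.rpow_natCast]

lemma aux_int_one (a : ℝ) (ha : 0 < a) :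
    IntegrableOn (fun u : ℝ => 1 / u ^ 2) (Ioi a) := by
  refine ((integrableOn_Ioi_rpow_of_lt (by norm_num : (-2:ℝ) < -1) ha)).congr_fun
    (fun x hx => (rpow_eq x (ha.trans hx))) measurableSet_Ioi

lemma aux_int_one_val (a : ℝ) (ha : 0 < a) :
    ∫ u in Ioi a, 1 / u ^ 2 = 1 / a := by
  rw [← setIntegral_congr_fun measurableSet_Ioi
      (f := fun u : ℝ => u ^ (-2:ℝ)) (fun x hx => rpow_eq x (ha.trans hx))]
  rw [integral_Ioi_rpow_of_lt (by norm_num) ha]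
  rw [show (-2:ℝ) + 1 = -1 by norm_num, Real.rpow_neg_one]
  norm_num


lemma aux_meas (t a : ℝ) (ha : 0 < a) :
    AEStronglyMeasurable (fun u : ℝ => Real.cos (t * u) / u ^ 2)
      (volume.restrict (Ioi a)) := by
  refine ContinuousOn.aestronglyMeasurable ?_ measurableSet_Ioi
  refine ContinuousOn.div (Continuous.continuousOn (by continuity))
    (Continuous.continuousOn (by continuity)) (fun x hx => ?_)
  exact pow_ne_zero _ (ne_of_gt (ha.trans hx))

lemma aux_int_cos (t a : ℝ) (ha : 0 < a) :
    IntegrableOn (fun u : ℝ => Real.cos (t * u) / u ^ 2) (Ioi a) := by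
  refine Integrable.mono' (aux_int_one a ha) (aux_meas t a ha) ?_
  filter_upwards [ae_restrict_mem measurableSet_Ioi] with x hx
  have hx0 : (0:ℝ) < x := ha.trans hx
  rw [Real.norm_eq_abs, abs_div, abs_of_pos (pow_pos hx0 2)]
  exact (div_le_div_iff_of_pos_right (pow_pos hx0 2)).2 (Real.abs_cos_le_one _)

lemma aux_int_abscos (t a : ℝ) (ha : 0 < a) :
    IntegrableOn (fun u : ℝ => |Real.cos (t * u)| / u ^ 2) (Ioi a) := by
  refine IntegrableOn.congr_fun (aux_int_cos t a ha).abs (fun x hx => ?_) measurableSet_Ioi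
  rw [abs_div, abs_of_pos (pow_pos (ha.trans hx) 2)]

lemma aux_strict (t a : ℝ) (ht : 0 < t) (ha : 0 < a) :
    ∫ u in Ioi a, |Real.cos (t * u)| / u ^ 2 < ∫ u in Ioi a, 1 / u ^ 2 := by
  have hint1 := aux_int_one a ha
  have hint2 := aux_int_abscos t a ha
  have key : 0 < ∫ u in Ioi a, (1 / u ^ 2 - |Real.cos (t * u)| / u ^ 2) := by
    rw [setIntegral_pos_iff_support_of_nonneg_ae]
    · -- measure of support positive
      set h : ℝ → ℝ := fun u => 1 / u ^ 2 - |Real.cos (t * u)| / u ^ 2 with hh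
      set S : Set ℝ := {u | Real.sin (t * u) = 0} with hS
      have hScount : S.Countable := by
        have : S ⊆ Set.range (fun n : ℤ => (n : ℝ) * Real.pi / t) := by
          intro u hu
          obtain ⟨n, hn⟩ := Real.sin_eq_zero_iff.1 hu
          exact ⟨n, by field_simp [ht.ne']; linarith [hn]⟩
        exact (Set.countable_range _).mono this
      have hsub : Ioi a \ S ⊆ Function.support h ∩ Ioi a := by
        rintro u ⟨hu1, hu2⟩
        have hu0 : (0:ℝ) < u := ha.trans hu1
        have hcos : |Real.cos (t * u)| < 1 := by
          rcases lt_or_eq_of_le (Real.abs_cos_le_one (t * u)) with h | h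
          · exact h
          · exfalso; apply hu2
            exact Real.sin_eq_zero_iff_cos_eq.2 (abs_eq (by norm_num : (0:ℝ) ≤ 1) |>.1 h)
        refine ⟨?_, hu1⟩
        have : 0 < h u := by
          have : 0 < (1 - |Real.cos (t * u)|) / u ^ 2 :=
            div_pos (by linarith) (pow_pos hu0 2)
          rw [hh]; simpa [sub_div] using this
        exact ne_of_gt this
      calc (0 : ENNReal) < volume (Ioi a \ S) := by
            rw [measure_diff_null (hScount.measure_zero _)]
            simp [Real.volume_Ioi]
        _ ≤ volume (Function.support h ∩ Ioi a) := measure_mono hsub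
    · refine Eventually.of_forall (fun u => ?_)
      rcases eq_or_ne u 0 with rfl | hu
      · simp
      · have h2 : (0:ℝ) < u ^ 2 := by positivity
        have : |Real.cos (t * u)| / u ^ 2 ≤ 1 / u ^ 2 :=
          (div_le_div_iff_of_pos_right h2).2 (Real.abs_cos_le_one _)
        simpa [sub_nonneg] using this
    · exact hint1.sub hint2
  have := MeasureTheory.integral_sub hint1 hint2
  rw [this] at key
  linarith

-- antiderivative
lemma aux_deriv (t : ℝ) (ht : 0 < t) (u : ℝ) (hu : 0 < u) :
    HasDerivAt (fun u : ℝ => -Real.cos (t * u) / (t * u))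
      (Real.sin (t * u) / u + Real.cos (t * u) / (t * u ^ 2)) u := by
  have h1 : HasDerivAt (fun u : ℝ => t * u) t u := by
    simpa using (hasDerivAt_id u).const_mul t
  have h2 : HasDerivAt (fun u : ℝ => -Real.cos (t * u)) (Real.sin (t * u) * t) u := by
    have := ((Real.hasDerivAt_cos (t * u)).comp u h1).neg
    rw [neg_mul, neg_neg] at this
    exact this
  have h3 := h2.div h1 (by positivity)
  refine h3.congr_deriv ?_
  field_simp
  ring

lemma aux_parts (t a b : ℝ) (ht : 0 < t) (ha : 0 < a) (hab : a ≤ b) :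
    ∫ u in a..b, Real.sin (t * u) / u =
      (-Real.cos (t * b) / (t * b)) - (-Real.cos (t * a) / (t * a))
        - ∫ u in a..b, Real.cos (t * u) / (t * u ^ 2) := by
  have hpos : ∀ u ∈ Set.uIcc a b, 0 < u := by
    intro u hu
    rw [Set.uIcc_of_le hab] at hu
    exact lt_of_lt_of_le ha hu.1
  have hc1 : ContinuousOn (fun u : ℝ => Real.sin (t * u) / u) (Set.uIcc a b) :=
    ContinuousOn.div (by fun_prop) (by fun_prop) (fun u hu => (hpos u hu).ne')
  have hc2 : ContinuousOn (fun u : ℝ => Real.cos (t * u) / (t * u ^ 2)) (Set.uIcc a b) :=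
    ContinuousOn.div (by fun_prop) (by fun_prop)
      (fun u hu => by have := hpos u hu; positivity)
  have hsum := intervalIntegral.integral_eq_sub_of_hasDerivAt
    (f := fun u : ℝ => -Real.cos (t * u) / (t * u))
    (f' := fun u => Real.sin (t * u) / u + Real.cos (t * u) / (t * u ^ 2))
    (fun u hu => aux_deriv t ht u (hpos u hu))
    ((hc1.add hc2).intervalIntegrable)
  rw [intervalIntegral.integral_add hc1.intervalIntegrable hc2.intervalIntegrable] at hsum
  linarith

/-- For `t > 0` and `a > 0` with `t·a = (2r−1)π` for some `r ≥ 1`, the tail integral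
`(∫_{-∞}^{-a} + ∫_{a}^{∞}) sin(tu)/(2πu) du` (taken as a symmetric limit) lies
strictly between `−2/(πta)` and `0`. -/
theorem stmt6 (t a : ℝ) (ht : 0 < t) (ha : 0 < a)
    (r : ℕ) (hr : 1 ≤ r) (hta : t * a = (2 * (r : ℝ) - 1) * Real.pi) :
    ∃ I : ℝ,
      Tendsto (fun b : ℝ =>
          (∫ u in a..b, Real.sin (t * u) / (2 * Real.pi * u)) +
          ∫ u in (-b)..(-a), Real.sin (t * u) / (2 * Real.pi * u))
        atTop (nhds I) ∧
      -(2 / (Real.pi * t * a)) < I ∧ I < 0 := by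
  have hπ := Real.pi_pos
  have hc : Real.cos (t * a) = -1 := by
    rw [hta, show (2 * (r:ℝ) - 1) * Real.pi = r * (2 * Real.pi) - Real.pi by ring,
      Real.cos_nat_mul_two_pi_sub_pi]
  set J : ℝ := ∫ u in Ioi a, Real.cos (t * u) / u ^ 2 with hJ
  have hJint := aux_int_cos t a ha
  have hJabs : |J| < 1 / a := by
    have h1 : |J| ≤ ∫ u in Ioi a, |Real.cos (t * u) / u ^ 2| := by
      rw [hJ, ← Real.norm_eq_abs]
      exact (MeasureTheory.norm_integral_le_integral_norm _).trans_eq (by simp only [Real.norm_eq_abs])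
    have h2 : (∫ u in Ioi a, |Real.cos (t * u) / u ^ 2|)
        = ∫ u in Ioi a, |Real.cos (t * u)| / u ^ 2 :=
      setIntegral_congr_fun measurableSet_Ioi (fun x hx => by
        rw [abs_div, abs_of_pos (pow_pos (ha.trans hx) 2)])
    calc |J| ≤ _ := h1
      _ = _ := h2
      _ < ∫ u in Ioi a, 1 / u ^ 2 := aux_strict t a ht ha
      _ = 1 / a := aux_int_one_val a ha
  -- limit of the cosine remainder integral
  have heq : (fun u : ℝ => Real.cos (t * u) / (t * u ^ 2))
      = fun u => t⁻¹ * (Real.cos (t * u) / u ^ 2) :=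
    funext fun u => by rw [mul_comm t (u ^ 2), ← div_div, div_eq_inv_mul]
  have T2 : Tendsto (fun b => ∫ u in a..b, Real.cos (t * u) / (t * u ^ 2))
      atTop (nhds (t⁻¹ * J)) := by
    simp only [heq, intervalIntegral.integral_const_mul]
    exact (MeasureTheory.intervalIntegral_tendsto_integral_Ioi a hJint tendsto_id).const_mul t⁻¹
  -- limit of the boundary term
  have T1 : Tendsto (fun b : ℝ => -Real.cos (t * b) / (t * b)) atTop (nhds 0) := by
    apply squeeze_zero_norm' (a := fun b : ℝ => (t * b)⁻¹)
    · filter_upwards [eventually_gt_atTop 0] with b hb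
      have htb : 0 < t * b := mul_pos ht hb
      rw [Real.norm_eq_abs, abs_div, abs_of_pos htb, abs_neg, ← one_div,
        div_le_div_iff_of_pos_right htb]
      exact Real.abs_cos_le_one _
    · exact tendsto_inv_atTop_zero.comp (tendsto_id.const_mul_atTop ht)
  -- limit of ∫ sin(tu)/u
  have L : Tendsto (fun b => ∫ u in a..b, Real.sin (t * u) / u)
      atTop (nhds (-(1 / (t * a)) - t⁻¹ * J)) := by
    have h0 : Tendsto (fun b : ℝ =>
        (-Real.cos (t * b) / (t * b)) - (-Real.cos (t * a) / (t * a))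
          - ∫ u in a..b, Real.cos (t * u) / (t * u ^ 2))
        atTop (nhds (0 - (-Real.cos (t * a) / (t * a)) - t⁻¹ * J)) :=
      ((T1.sub_const _).sub T2)
    rw [hc] at h0
    have h1 : (0:ℝ) - (-(-1) / (t * a)) - t⁻¹ * J = -(1 / (t * a)) - t⁻¹ * J := by ring
    rw [h1] at h0
    refine h0.congr' ?_
    filter_upwards [eventually_ge_atTop a] with b hb
    rw [aux_parts t a b ht ha hb, hc]
  -- rewrite the full expression
  have hfun : (fun b : ℝ =>
      (∫ u in a..b, Real.sin (t * u) / (2 * Real.pi * u)) +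
      ∫ u in (-b)..(-a), Real.sin (t * u) / (2 * Real.pi * u))
      = fun b => Real.pi⁻¹ * ∫ u in a..b, Real.sin (t * u) / u := by
    funext b
    have hev : (∫ u in (-b)..(-a), Real.sin (t * u) / (2 * Real.pi * u))
        = ∫ u in a..b, Real.sin (t * u) / (2 * Real.pi * u) := by
      rw [← intervalIntegral.integral_comp_neg
          (fun u => Real.sin (t * u) / (2 * Real.pi * u))]
      simp only [mul_neg, Real.sin_neg, neg_div_neg_eq]
    have hscale : (∫ u in a..b, Real.sin (t * u) / (2 * Real.pi * u))
        = (2 * Real.pi)⁻¹ * ∫ u in a..b, Real.sin (t * u) / u := by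
      rw [show (fun u : ℝ => Real.sin (t * u) / (2 * Real.pi * u))
          = fun u => (2 * Real.pi)⁻¹ * (Real.sin (t * u) / u) from
        funext fun u => by rw [mul_comm (2 * Real.pi), ← div_div, div_eq_inv_mul],
        intervalIntegral.integral_const_mul]
    rw [hev, hscale]
    rw [show Real.pi⁻¹ = 2 * (2 * Real.pi)⁻¹ by rw [mul_inv]; field_simp]
    ring
  refine ⟨Real.pi⁻¹ * (-(1 / (t * a)) - t⁻¹ * J), by rw [hfun]; exact L.const_mul _, ?_, ?_⟩
  · -- lower bound
    obtain ⟨hJ1, hJ2⟩ := abs_lt.1 hJabs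
    have hlow : -(2 / (t * a)) < -(1 / (t * a)) - t⁻¹ * J := by
      have h2c : 2 / (t * a) = 1 / (t * a) + 1 / (t * a) := by ring
      have h3 : t⁻¹ * J < t⁻¹ * (1 / a) := mul_lt_mul_of_pos_left hJ2 (inv_pos.2 ht)
      have h5 : t⁻¹ * (1 / a) = 1 / (t * a) := by field_simp
      linarith
    have := mul_lt_mul_of_pos_left hlow (inv_pos.2 hπ)
    calc -(2 / (Real.pi * t * a)) = Real.pi⁻¹ * -(2 / (t * a)) := by
          field_simp
      _ < _ := this
  · -- upper bound
    obtain ⟨hJ1, hJ2⟩ := abs_lt.1 hJabs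
    have hup : -(1 / (t * a)) - t⁻¹ * J < 0 := by
      have h4 : t⁻¹ * -(1 / a) < t⁻¹ * J := mul_lt_mul_of_pos_left hJ1 (inv_pos.2 ht)
      have h5 : t⁻¹ * (1 / a) = 1 / (t * a) := by field_simp
      have h6 : t⁻¹ * -(1 / a) = -(1 / (t * a)) := by rw [mul_neg, h5]
      linarith
    exact mul_neg_of_pos_of_neg (inv_pos.2 hπ) hup
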